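/- For every natural number n and all complex numbers w, v: ∫_ℂ (z - w)^n · exp(-2π|z|²) · exp(2πi(z·conj(v) + conj(z)·v)) dμ(z) = (i·v - w)^n · exp(-2π|v|²), where μ is twice the Lebesgue measure on ℂ and |z|² = z·conj(z). -/

import Mathlib

open MeasureTheory ComplexConjugate

open Real
open Complex (I)

noncomputable section

local notation "cexp" => Complex.exp

namespace GPF

def zz (x y : ℝ) : ℂ := (x:ℂ) + (y:ℂ) * I

def Ez (s : ℂ) (x y : ℝ) : ℂ := cexp (-(2*(π:ℂ))*((x:ℂ)^2+(y:ℂ)^2) + s * zz x y)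

-- integral of a derivative over ℝ is zero
lemma integral_deriv_eq_zero' (f : ℝ → ℂ) (hd : Differentiable ℝ f) (hi : Integrable f)
    (hi' : Integrable (deriv f)) : ∫ x : ℝ, deriv f x = 0 := by
  have h := congrFun (Real.fourier_deriv hi hd hi') 0
  simp only [Real.fourier_real_eq] at h
  simpa using h

-- 1D master integrability
lemma oneD_int (j : ℕ) (d : ℝ) :
    Integrable (fun x : ℝ => |x| ^ j * Real.exp (-(2 * π) * x ^ 2 + d * |x|)) := by
  have hb : Integrable (fun x : ℝ => ‖Real.exp (d ^ 2 / (4 * π)) * (x ^ (j : ℝ) * Real.exp (-π * x ^ 2))‖) :=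
    (integrable_rpow_mul_exp_neg_mul_sq Real.pi_pos
      (show (-1:ℝ) < (j:ℝ) by exact lt_of_lt_of_le (by norm_num) (Nat.cast_nonneg j))).const_mul _ |>.norm
  refine hb.mono' ?_ ?_
  · exact ((continuous_abs.pow j).mul ((continuous_const.mul (continuous_pow 2)).add
      (continuous_const.mul continuous_abs)).rexp).aestronglyMeasurable
  · filter_upwards with x
    rw [Real.norm_eq_abs, abs_of_nonneg (by positivity)]
    have key : -(2 * π) * x ^ 2 + d * |x| ≤ d ^ 2 / (4 * π) + -π * x ^ 2 := by
      have h4 : d * |x| - π * x ^ 2 ≤ d ^ 2 / (4 * π) := by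
        rw [le_div_iff₀ (by positivity), ← sq_abs x]
        nlinarith [sq_nonneg (2 * π * |x| - d)]
      linarith
    calc |x| ^ j * Real.exp (-(2 * π) * x ^ 2 + d * |x|)
        ≤ |x| ^ j * Real.exp (d ^ 2 / (4 * π) + -π * x ^ 2) :=
          mul_le_mul_of_nonneg_left (Real.exp_le_exp.mpr key) (by positivity)
      _ = ‖Real.exp (d ^ 2 / (4 * π)) * (x ^ (j:ℝ) * Real.exp (-π * x ^ 2))‖ := by
          rw [Real.norm_eq_abs, Real.rpow_natCast, abs_mul, abs_mul, abs_pow,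
            abs_of_nonneg (Real.exp_pos _).le, _root_.abs_of_nonneg (Real.exp_pos _).le,
            Real.exp_add]
          ring

-- 1D integrability with (1+|x|)^m factor
lemma oneD_int' (m : ℕ) (a : ℝ) :
    Integrable (fun x : ℝ => (1 + |x|) ^ m * Real.exp (-(2 * π) * x ^ 2 + a * |x|)) := by
  have : (fun x : ℝ => (1 + |x|) ^ m * Real.exp (-(2 * π) * x ^ 2 + a * |x|)) =
      fun x : ℝ => ∑ i ∈ Finset.range (m + 1),
        ((m.choose i : ℝ)) * (|x| ^ i * Real.exp (-(2 * π) * x ^ 2 + a * |x|)) := by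
    funext x
    rw [add_comm 1 |x|, add_pow, Finset.sum_mul]
    refine Finset.sum_congr rfl fun i _ => by ring
  rw [this]
  exact integrable_finset_sum _ fun i _ => (oneD_int i a).const_mul _

-- 1D comparison lemma
lemma oneD_comp (f : ℝ → ℂ) (m : ℕ) (a C : ℝ) (hf : Continuous f)
    (hb : ∀ x, ‖f x‖ ≤ C * ((1 + |x|) ^ m * Real.exp (-(2 * π) * x ^ 2 + a * |x|))) :
    Integrable f := by
  refine ((oneD_int' m a).const_mul C).mono' hf.aestronglyMeasurable ?_
  filter_upwards with x using hb x

-- 2D comparison lemma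
lemma twoD_comp (f : ℝ × ℝ → ℂ) (m : ℕ) (a C : ℝ) (hf : Continuous f)
    (hb : ∀ p : ℝ × ℝ, ‖f p‖ ≤ C * ((1 + |p.1|) ^ m * Real.exp (-(2 * π) * p.1 ^ 2 + a * |p.1|)) *
      ((1 + |p.2|) ^ m * Real.exp (-(2 * π) * p.2 ^ 2 + a * |p.2|))) :
    Integrable f := by
  have hint : Integrable (fun p : ℝ × ℝ =>
      (C * ((1 + |p.1|) ^ m * Real.exp (-(2 * π) * p.1 ^ 2 + a * |p.1|))) *
      ((1 + |p.2|) ^ m * Real.exp (-(2 * π) * p.2 ^ 2 + a * |p.2|))) := by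
    rw [Measure.volume_eq_prod]
    exact ((oneD_int' m a).const_mul C).mul_prod (oneD_int' m a)
  refine hint.mono' hf.aestronglyMeasurable ?_
  filter_upwards with p
  calc ‖f p‖ ≤ _ := hb p
    _ = _ := by ring

-- norm of the exponential factor
lemma normE_le (s : ℂ) (x y : ℝ) :
    ‖Ez s x y‖ ≤
      Real.exp (-(2 * π) * x ^ 2 + ‖s‖ * |x|) * Real.exp (-(2 * π) * y ^ 2 + ‖s‖ * |y|) := by
  rw [Ez, zz, Complex.norm_exp, ← Real.exp_add]
  apply Real.exp_le_exp.mpr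
  have h1 : (-(2 * (π : ℂ)) * ((x : ℂ) ^ 2 + (y : ℂ) ^ 2) +
      s * ((x : ℂ) + (y : ℂ) * I)).re = -(2 * π) * (x ^ 2 + y ^ 2) +
      (s * ((x : ℂ) + (y : ℂ) * I)).re := by
    have e : -(2 * (π : ℂ)) * ((x : ℂ) ^ 2 + (y : ℂ) ^ 2) =
        ((-(2 * π) * (x ^ 2 + y ^ 2) : ℝ) : ℂ) := by push_cast; ring
    rw [e, Complex.add_re, Complex.ofReal_re]
  rw [h1]
  have h2 : (s * ((x : ℂ) + (y : ℂ) * I)).re ≤ ‖s‖ * (|x| + |y|) := by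
    refine (Complex.re_le_norm _).trans ?_
    rw [norm_mul]
    gcongr
    calc ‖(x : ℂ) + (y : ℂ) * I‖ ≤ ‖(x : ℂ)‖ + ‖(y : ℂ) * I‖ :=
          norm_add_le _ _
      _ = |x| + |y| := by simp
  nlinarith [h2]

lemma normZ_le (x y : ℝ) (k : ℕ) :
    ‖zz x y ^ k‖ ≤ (1 + |x|) ^ k * (1 + |y|) ^ k := by
  rw [zz, norm_pow, ← mul_pow]
  gcongr
  calc ‖(x : ℂ) + (y : ℂ) * I‖ ≤ ‖(x : ℂ)‖ + ‖(y : ℂ) * I‖ := norm_add_le _ _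
    _ = |x| + |y| := by simp
    _ ≤ (1 + |x|) * (1 + |y|) := by nlinarith [abs_nonneg x, abs_nonneg y]

lemma cont_Ez2 (s : ℂ) : Continuous fun p : ℝ × ℝ => Ez s p.1 p.2 := by
  unfold Ez zz; fun_prop

lemma cont_zz2 : Continuous fun p : ℝ × ℝ => zz p.1 p.2 := by
  unfold zz; fun_prop

-- 2D integrability of z^m * E
lemma J1 (m : ℕ) (s : ℂ) :
    Integrable (fun p : ℝ × ℝ => zz p.1 p.2 ^ m * Ez s p.1 p.2) := by
  refine twoD_comp _ m ‖s‖ 1 ((cont_zz2.pow m).mul (cont_Ez2 s)) fun p => ?_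
  rw [norm_mul, one_mul, mul_mul_mul_comm]
  exact mul_le_mul (normZ_le p.1 p.2 m) (normE_le s p.1 p.2) (norm_nonneg _) (by positivity)

-- 2D integrability of x * z^m * E
lemma J2 (m : ℕ) (s : ℂ) :
    Integrable (fun p : ℝ × ℝ => (p.1 : ℂ) * (zz p.1 p.2 ^ m * Ez s p.1 p.2)) := by
  refine twoD_comp _ (m+1) ‖s‖ 1
    ((Complex.continuous_ofReal.comp continuous_fst).mul ((cont_zz2.pow m).mul (cont_Ez2 s)))
    fun p => ?_
  rw [norm_mul, norm_mul, one_mul, Complex.norm_real, Real.norm_eq_abs]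
  calc |p.1| * (‖zz p.1 p.2 ^ m‖ * ‖Ez s p.1 p.2‖)
      ≤ |p.1| * (((1 + |p.1|) ^ m * (1 + |p.2|) ^ m) *
        (Real.exp (-(2 * π) * p.1 ^ 2 + ‖s‖ * |p.1|) * Real.exp (-(2 * π) * p.2 ^ 2 + ‖s‖ * |p.2|))) := by
        refine mul_le_mul_of_nonneg_left ?_ (abs_nonneg _)
        exact mul_le_mul (normZ_le p.1 p.2 m) (normE_le s p.1 p.2) (norm_nonneg _) (by positivity)
    _ ≤ _ := by
        have h1 : |p.1| * (1 + |p.1|) ^ m ≤ (1 + |p.1|) ^ (m + 1) := by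
          rw [pow_succ']
          exact mul_le_mul_of_nonneg_right (by linarith [abs_nonneg p.1]) (by positivity)
        have h2 : (1 + |p.2|) ^ m ≤ (1 + |p.2|) ^ (m + 1) := by
          refine pow_le_pow_right₀ (by nlinarith [abs_nonneg p.2]) (by omega)
        nlinarith [Real.exp_pos (-(2 * π) * p.1 ^ 2 + ‖s‖ * |p.1|),
          Real.exp_pos (-(2 * π) * p.2 ^ 2 + ‖s‖ * |p.2|),
          mul_le_mul h1 h2 (by positivity) (by positivity),
          mul_pos (Real.exp_pos (-(2 * π) * p.1 ^ 2 + ‖s‖ * |p.1|)) (Real.exp_pos (-(2 * π) * p.2 ^ 2 + ‖s‖ * |p.2|))]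

-- 2D integrability of y * z^m * E
lemma J3 (m : ℕ) (s : ℂ) :
    Integrable (fun p : ℝ × ℝ => (p.2 : ℂ) * (zz p.1 p.2 ^ m * Ez s p.1 p.2)) := by
  refine twoD_comp _ (m+1) ‖s‖ 1
    ((Complex.continuous_ofReal.comp continuous_snd).mul ((cont_zz2.pow m).mul (cont_Ez2 s)))
    fun p => ?_
  rw [norm_mul, norm_mul, one_mul, Complex.norm_real, Real.norm_eq_abs]
  calc |p.2| * (‖zz p.1 p.2 ^ m‖ * ‖Ez s p.1 p.2‖)
      ≤ |p.2| * (((1 + |p.1|) ^ m * (1 + |p.2|) ^ m) *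
        (Real.exp (-(2 * π) * p.1 ^ 2 + ‖s‖ * |p.1|) * Real.exp (-(2 * π) * p.2 ^ 2 + ‖s‖ * |p.2|))) := by
        refine mul_le_mul_of_nonneg_left ?_ (abs_nonneg _)
        exact mul_le_mul (normZ_le p.1 p.2 m) (normE_le s p.1 p.2) (norm_nonneg _) (by positivity)
    _ ≤ _ := by
        have h1 : |p.2| * (1 + |p.2|) ^ m ≤ (1 + |p.2|) ^ (m + 1) := by
          rw [pow_succ']
          exact mul_le_mul_of_nonneg_right (by linarith [abs_nonneg p.2]) (by positivity)
        have h2 : (1 + |p.1|) ^ m ≤ (1 + |p.1|) ^ (m + 1) := by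
          refine pow_le_pow_right₀ (by nlinarith [abs_nonneg p.1]) (by omega)
        nlinarith [Real.exp_pos (-(2 * π) * p.1 ^ 2 + ‖s‖ * |p.1|),
          Real.exp_pos (-(2 * π) * p.2 ^ 2 + ‖s‖ * |p.2|),
          mul_le_mul h2 h1 (by positivity) (by positivity),
          mul_pos (Real.exp_pos (-(2 * π) * p.1 ^ 2 + ‖s‖ * |p.1|)) (Real.exp_pos (-(2 * π) * p.2 ^ 2 + ‖s‖ * |p.2|))]

-- fixed-y 1D integrability of z^k E
lemma oneD1 (k : ℕ) (s : ℂ) (y : ℝ) :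
    Integrable (fun x : ℝ => zz x y ^ k * Ez s x y) := by
  refine oneD_comp _ k ‖s‖ ((1+|y|)^k * Real.exp (-(2*π)*y^2 + ‖s‖*|y|))
    (by simp only [zz, Ez]; fun_prop) fun x => ?_
  rw [norm_mul]
  calc ‖zz x y ^ k‖ * ‖Ez s x y‖
      ≤ ((1+|x|)^k * (1+|y|)^k) *
        (Real.exp (-(2*π)*x^2 + ‖s‖*|x|) * Real.exp (-(2*π)*y^2 + ‖s‖*|y|)) :=
        mul_le_mul (normZ_le x y k) (normE_le s x y) (norm_nonneg _) (by positivity)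
    _ = _ := by ring

-- fixed-y 1D integrability of x * z^k E
lemma oneD2 (k : ℕ) (s : ℂ) (y : ℝ) :
    Integrable (fun x : ℝ => (x:ℂ) * (zz x y ^ k * Ez s x y)) := by
  refine oneD_comp _ (k+1) ‖s‖ ((1+|y|)^k * Real.exp (-(2*π)*y^2 + ‖s‖*|y|))
    (by simp only [zz, Ez]; fun_prop) fun x => ?_
  rw [norm_mul, norm_mul, Complex.norm_real, Real.norm_eq_abs]
  calc |x| * (‖zz x y ^ k‖ * ‖Ez s x y‖)
      ≤ |x| * (((1+|x|)^k * (1+|y|)^k) *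
        (Real.exp (-(2*π)*x^2 + ‖s‖*|x|) * Real.exp (-(2*π)*y^2 + ‖s‖*|y|))) := by
        refine mul_le_mul_of_nonneg_left ?_ (abs_nonneg _)
        exact mul_le_mul (normZ_le x y k) (normE_le s x y) (norm_nonneg _) (by positivity)
    _ ≤ ((1+|x|) * (1+|x|)^k) * (1+|y|)^k *
        (Real.exp (-(2*π)*x^2 + ‖s‖*|x|) * Real.exp (-(2*π)*y^2 + ‖s‖*|y|)) := by
        have hx1 : |x| ≤ 1 + |x| := by linarith [abs_nonneg x]
        have := mul_le_mul_of_nonneg_right hx1 (by positivity :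
          (0:ℝ) ≤ (1+|x|)^k * (1+|y|)^k * (Real.exp (-(2*π)*x^2 + ‖s‖*|x|) * Real.exp (-(2*π)*y^2 + ‖s‖*|y|)))
        calc |x| * (((1+|x|)^k * (1+|y|)^k) * (Real.exp (-(2*π)*x^2 + ‖s‖*|x|) * Real.exp (-(2*π)*y^2 + ‖s‖*|y|)))
            = |x| * ((1+|x|)^k * (1+|y|)^k * (Real.exp (-(2*π)*x^2 + ‖s‖*|x|) * Real.exp (-(2*π)*y^2 + ‖s‖*|y|))) := by ring
          _ ≤ (1+|x|) * ((1+|x|)^k * (1+|y|)^k * (Real.exp (-(2*π)*x^2 + ‖s‖*|x|) * Real.exp (-(2*π)*y^2 + ‖s‖*|y|))) := this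
          _ = _ := by ring
    _ = _ := by rw [← pow_succ']; ring


-- fixed-x 1D integrability of z^k E (in y)
lemma oneD1y (k : ℕ) (s : ℂ) (x : ℝ) :
    Integrable (fun y : ℝ => zz x y ^ k * Ez s x y) := by
  refine oneD_comp _ k ‖s‖ ((1+|x|)^k * Real.exp (-(2*π)*x^2 + ‖s‖*|x|))
    (by simp only [zz, Ez]; fun_prop) fun y => ?_
  rw [norm_mul]
  calc ‖zz x y ^ k‖ * ‖Ez s x y‖
      ≤ ((1+|x|)^k * (1+|y|)^k) *
        (Real.exp (-(2*π)*x^2 + ‖s‖*|x|) * Real.exp (-(2*π)*y^2 + ‖s‖*|y|)) :=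
        mul_le_mul (normZ_le x y k) (normE_le s x y) (norm_nonneg _) (by positivity)
    _ = _ := by ring

-- fixed-x 1D integrability of y * z^k E
lemma oneD2y (k : ℕ) (s : ℂ) (x : ℝ) :
    Integrable (fun y : ℝ => (y:ℂ) * (zz x y ^ k * Ez s x y)) := by
  refine oneD_comp _ (k+1) ‖s‖ ((1+|x|)^k * Real.exp (-(2*π)*x^2 + ‖s‖*|x|))
    (by simp only [zz, Ez]; fun_prop) fun y => ?_
  rw [norm_mul, norm_mul, Complex.norm_real, Real.norm_eq_abs]
  calc |y| * (‖zz x y ^ k‖ * ‖Ez s x y‖)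
      ≤ |y| * (((1+|x|)^k * (1+|y|)^k) *
        (Real.exp (-(2*π)*x^2 + ‖s‖*|x|) * Real.exp (-(2*π)*y^2 + ‖s‖*|y|))) := by
        refine mul_le_mul_of_nonneg_left ?_ (abs_nonneg _)
        exact mul_le_mul (normZ_le x y k) (normE_le s x y) (norm_nonneg _) (by positivity)
    _ ≤ ((1+|y|) * (1+|y|)^k) * (1+|x|)^k *
        (Real.exp (-(2*π)*x^2 + ‖s‖*|x|) * Real.exp (-(2*π)*y^2 + ‖s‖*|y|)) := by
        have hx1 : |y| ≤ 1 + |y| := by linarith [abs_nonneg y]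
        have h2 := mul_le_mul_of_nonneg_right hx1 (by positivity :
          (0:ℝ) ≤ (1+|x|)^k * (1+|y|)^k * (Real.exp (-(2*π)*x^2 + ‖s‖*|x|) * Real.exp (-(2*π)*y^2 + ‖s‖*|y|)))
        calc |y| * (((1+|x|)^k * (1+|y|)^k) * (Real.exp (-(2*π)*x^2 + ‖s‖*|x|) * Real.exp (-(2*π)*y^2 + ‖s‖*|y|)))
            = |y| * ((1+|x|)^k * (1+|y|)^k * (Real.exp (-(2*π)*x^2 + ‖s‖*|x|) * Real.exp (-(2*π)*y^2 + ‖s‖*|y|))) := by ring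
          _ ≤ (1+|y|) * ((1+|x|)^k * (1+|y|)^k * (Real.exp (-(2*π)*x^2 + ‖s‖*|x|) * Real.exp (-(2*π)*y^2 + ‖s‖*|y|))) := h2
          _ = _ := by ring
    _ = _ := by rw [← pow_succ']; ring

-- x-derivative
lemma hx (k : ℕ) (s : ℂ) (y x : ℝ) :
    HasDerivAt (fun t : ℝ => zz t y ^ k * Ez s t y)
      ((k:ℂ) * (zz x y ^ (k-1) * Ez s x y) + (-(4*(π:ℂ))) * ((x:ℂ) * (zz x y ^ k * Ez s x y))
        + s * (zz x y ^ k * Ez s x y)) x := by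
  have h1 : HasDerivAt (fun u : ℂ => (u + (y:ℂ)*I)^k) ((k:ℂ) * ((x:ℂ) + (y:ℂ)*I)^(k-1)) ((x:ℂ)) := by
    simpa [Pi.pow_def] using ((hasDerivAt_id ((x:ℂ))).add_const ((y:ℂ)*I)).pow k
  have h2 : HasDerivAt (fun u : ℂ => -(2*(π:ℂ))*(u^2+((y:ℂ))^2) + s*(u+(y:ℂ)*I))
      (-(4*(π:ℂ))*(x:ℂ) + s) ((x:ℂ)) := by
    have ha : HasDerivAt (fun u : ℂ => u^2) (2*(x:ℂ)) ((x:ℂ)) := by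
      simpa using hasDerivAt_pow 2 ((x:ℂ))
    have hb := ((ha.add_const ((y:ℂ)^2)).const_mul (-(2*(π:ℂ)))).add
      (((hasDerivAt_id ((x:ℂ))).add_const ((y:ℂ)*I)).const_mul s)
    exact hb.congr_deriv (by ring)
  have h4 := (h1.mul h2.cexp).comp_ofReal
  simp only [zz, Ez]
  exact h4.congr_deriv (by ring)

-- y-derivative
lemma hy (k : ℕ) (s : ℂ) (x y : ℝ) :
    HasDerivAt (fun t : ℝ => zz x t ^ k * Ez s x t)
      ((k:ℂ) * I * (zz x y ^ (k-1) * Ez s x y) + (-(4*(π:ℂ))) * ((y:ℂ) * (zz x y ^ k * Ez s x y))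
        + (s*I) * (zz x y ^ k * Ez s x y)) y := by
  have h1 : HasDerivAt (fun u : ℂ => ((x:ℂ) + u*I)^k) ((k:ℂ) * ((x:ℂ) + (y:ℂ)*I)^(k-1) * I) ((y:ℂ)) := by
    have := (((hasDerivAt_id ((y:ℂ))).mul_const I).const_add ((x:ℂ))).pow k
    simpa [Pi.pow_def] using this
  have h2 : HasDerivAt (fun u : ℂ => -(2*(π:ℂ))*(((x:ℂ))^2+u^2) + s*((x:ℂ)+u*I))
      (-(4*(π:ℂ))*(y:ℂ) + s*I) ((y:ℂ)) := by
    have ha : HasDerivAt (fun u : ℂ => u^2) (2*(y:ℂ)) ((y:ℂ)) := by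
      simpa using hasDerivAt_pow 2 ((y:ℂ))
    have hb := ((ha.const_add (((x:ℂ))^2)).const_mul (-(2*(π:ℂ)))).add
      (((hasDerivAt_id ((y:ℂ))).mul_const I).const_add ((x:ℂ)) |>.const_mul s)
    exact hb.congr_deriv (by ring)
  have h4 := (h1.mul h2.cexp).comp_ofReal
  simp only [zz, Ez]
  exact h4.congr_deriv (by ring)

-- integral of the x-derivative vanishes
lemma DXzero (k : ℕ) (s : ℂ) :
    ∫ p : ℝ × ℝ, ((k:ℂ) * (zz p.1 p.2 ^ (k-1) * Ez s p.1 p.2)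
      + (-(4*(π:ℂ))) * ((p.1:ℂ) * (zz p.1 p.2 ^ k * Ez s p.1 p.2))
      + s * (zz p.1 p.2 ^ k * Ez s p.1 p.2)) = 0 := by
  have hFint : Integrable (fun p : ℝ × ℝ => (k:ℂ) * (zz p.1 p.2 ^ (k-1) * Ez s p.1 p.2)
      + (-(4*(π:ℂ))) * ((p.1:ℂ) * (zz p.1 p.2 ^ k * Ez s p.1 p.2))
      + s * (zz p.1 p.2 ^ k * Ez s p.1 p.2)) :=
    (((J1 (k-1) s).const_mul _).add ((J2 k s).const_mul _)).add ((J1 k s).const_mul _)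
  rw [Measure.volume_eq_prod] at hFint ⊢
  rw [integral_prod_symm _ hFint]
  have inner : ∀ y : ℝ, (∫ x : ℝ, ((k:ℂ) * (zz x y ^ (k-1) * Ez s x y)
      + (-(4*(π:ℂ))) * ((x:ℂ) * (zz x y ^ k * Ez s x y))
      + s * (zz x y ^ k * Ez s x y))) = 0 := by
    intro y
    have hderiv : deriv (fun t : ℝ => zz t y ^ k * Ez s t y) = fun x : ℝ =>
        ((k:ℂ) * (zz x y ^ (k-1) * Ez s x y)
        + (-(4*(π:ℂ))) * ((x:ℂ) * (zz x y ^ k * Ez s x y))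
        + s * (zz x y ^ k * Ez s x y)) :=
      funext fun x => (hx k s y x).deriv
    rw [← hderiv]
    refine integral_deriv_eq_zero' _ (fun x => (hx k s y x).differentiableAt) (oneD1 k s y) ?_
    rw [hderiv]
    exact (((oneD1 (k-1) s y).const_mul _).add ((oneD2 k s y).const_mul _)).add ((oneD1 k s y).const_mul _)
  simp only [inner, integral_zero]

-- integral of the y-derivative vanishes
lemma DYzero (k : ℕ) (s : ℂ) :
    ∫ p : ℝ × ℝ, ((k:ℂ) * I * (zz p.1 p.2 ^ (k-1) * Ez s p.1 p.2)
      + (-(4*(π:ℂ))) * ((p.2:ℂ) * (zz p.1 p.2 ^ k * Ez s p.1 p.2))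
      + (s*I) * (zz p.1 p.2 ^ k * Ez s p.1 p.2)) = 0 := by
  have hFint : Integrable (fun p : ℝ × ℝ => (k:ℂ) * I * (zz p.1 p.2 ^ (k-1) * Ez s p.1 p.2)
      + (-(4*(π:ℂ))) * ((p.2:ℂ) * (zz p.1 p.2 ^ k * Ez s p.1 p.2))
      + (s*I) * (zz p.1 p.2 ^ k * Ez s p.1 p.2)) :=
    (((J1 (k-1) s).const_mul _).add ((J3 k s).const_mul _)).add ((J1 k s).const_mul _)
  rw [Measure.volume_eq_prod] at hFint ⊢
  rw [integral_prod _ hFint]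
  have inner : ∀ x : ℝ, (∫ y : ℝ, ((k:ℂ) * I * (zz x y ^ (k-1) * Ez s x y)
      + (-(4*(π:ℂ))) * ((y:ℂ) * (zz x y ^ k * Ez s x y))
      + (s*I) * (zz x y ^ k * Ez s x y))) = 0 := by
    intro x
    have hderiv : deriv (fun t : ℝ => zz x t ^ k * Ez s x t) = fun y : ℝ =>
        ((k:ℂ) * I * (zz x y ^ (k-1) * Ez s x y)
        + (-(4*(π:ℂ))) * ((y:ℂ) * (zz x y ^ k * Ez s x y))
        + (s*I) * (zz x y ^ k * Ez s x y)) :=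
      funext fun y => (hy k s x y).deriv
    rw [← hderiv]
    refine integral_deriv_eq_zero' _ (fun y => (hy k s x y).differentiableAt) ?_ ?_
    · exact oneD1y k s x
    rw [hderiv]
    exact ((((oneD1y (k-1) s x).const_mul _).add ((oneD2y k s x).const_mul _)).add ((oneD1y k s x).const_mul _))
  simp only [inner, integral_zero]

lemma K0 (s : ℂ) : ∫ p : ℝ × ℝ, Ez s p.1 p.2 = 1/2 := by
  have hb : (-(2*(π:ℂ))).re < 0 := by
    simp only [Complex.neg_re, Complex.mul_re, Complex.ofReal_re]
    simp [Real.pi_pos]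
  have hπ : (π:ℂ) ≠ 0 := Complex.ofReal_ne_zero.mpr Real.pi_ne_zero
  have hsplit : ∀ p : ℝ × ℝ, Ez s p.1 p.2 =
      cexp (-(2*(π:ℂ)) * (p.1:ℂ)^2 + s * (p.1:ℂ) + 0) *
      cexp (-(2*(π:ℂ)) * (p.2:ℂ)^2 + (s*I) * (p.2:ℂ) + 0) := fun p => by
    rw [Ez, zz, ← Complex.exp_add]
    ring_nf
  simp only [hsplit]
  rw [Measure.volume_eq_prod,
    integral_prod_mul (fun x : ℝ => cexp (-(2*(π:ℂ)) * (x:ℂ)^2 + s * (x:ℂ) + 0))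
      (fun y : ℝ => cexp (-(2*(π:ℂ)) * (y:ℂ)^2 + (s*I) * (y:ℂ) + 0)),
    integral_cexp_quadratic hb s 0, integral_cexp_quadratic hb (s*I) 0]
  have h1 : (π:ℂ) / -(-(2*(π:ℂ))) = 1/2 := by
    rw [neg_neg]
    field_simp
  have h2 : (0:ℂ) - (s*I)^2/(4 * -(2*(π:ℂ))) = -((0:ℂ) - s^2/(4 * -(2*(π:ℂ)))) := by
    rw [mul_pow, Complex.I_sq]
    ring
  rw [h1, h2, mul_mul_mul_comm, ← Complex.exp_add, add_neg_cancel, Complex.exp_zero, mul_one,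
    ← Complex.cpow_add _ _ (by norm_num : (1/2:ℂ) ≠ 0)]
  norm_num

lemma Ksucc (k : ℕ) (s : ℂ) : ∫ p : ℝ × ℝ, zz p.1 p.2 ^ (k+1) * Ez s p.1 p.2 = 0 := by
  have h4π : (-(4*(π:ℂ))) ≠ 0 := by
    simp [Real.pi_ne_zero]
  have hpt : ∀ p : ℝ × ℝ, ((k:ℂ) * (zz p.1 p.2 ^ (k-1) * Ez s p.1 p.2)
      + (-(4*(π:ℂ))) * ((p.1:ℂ) * (zz p.1 p.2 ^ k * Ez s p.1 p.2))
      + s * (zz p.1 p.2 ^ k * Ez s p.1 p.2))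
      + I * ((k:ℂ) * I * (zz p.1 p.2 ^ (k-1) * Ez s p.1 p.2)
      + (-(4*(π:ℂ))) * ((p.2:ℂ) * (zz p.1 p.2 ^ k * Ez s p.1 p.2))
      + (s*I) * (zz p.1 p.2 ^ k * Ez s p.1 p.2)) =
      (-(4*(π:ℂ))) * (zz p.1 p.2 ^ (k+1) * Ez s p.1 p.2) := fun p => by
    rw [pow_succ]
    simp only [zz]
    linear_combination ((k:ℂ) * (((p.1:ℂ) + (p.2:ℂ)*I) ^ (k-1) * Ez s p.1 p.2)
      + s * (((p.1:ℂ) + (p.2:ℂ)*I) ^ k * Ez s p.1 p.2)) * Complex.I_sq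
  have heq : (fun p : ℝ × ℝ => zz p.1 p.2 ^ (k+1) * Ez s p.1 p.2) =
      fun p : ℝ × ℝ => (-(4*(π:ℂ)))⁻¹ * (((k:ℂ) * (zz p.1 p.2 ^ (k-1) * Ez s p.1 p.2)
      + (-(4*(π:ℂ))) * ((p.1:ℂ) * (zz p.1 p.2 ^ k * Ez s p.1 p.2))
      + s * (zz p.1 p.2 ^ k * Ez s p.1 p.2))
      + I * ((k:ℂ) * I * (zz p.1 p.2 ^ (k-1) * Ez s p.1 p.2)
      + (-(4*(π:ℂ))) * ((p.2:ℂ) * (zz p.1 p.2 ^ k * Ez s p.1 p.2))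
      + (s*I) * (zz p.1 p.2 ^ k * Ez s p.1 p.2))) := by
    funext p
    rw [hpt p, inv_mul_cancel_left₀ h4π]
  rw [heq]
  have hDX : Integrable (fun p : ℝ × ℝ => (k:ℂ) * (zz p.1 p.2 ^ (k-1) * Ez s p.1 p.2)
      + (-(4*(π:ℂ))) * ((p.1:ℂ) * (zz p.1 p.2 ^ k * Ez s p.1 p.2))
      + s * (zz p.1 p.2 ^ k * Ez s p.1 p.2)) :=
    (((J1 (k-1) s).const_mul _).add ((J2 k s).const_mul _)).add ((J1 k s).const_mul _)
  have hDY : Integrable (fun p : ℝ × ℝ => (k:ℂ) * I * (zz p.1 p.2 ^ (k-1) * Ez s p.1 p.2)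
      + (-(4*(π:ℂ))) * ((p.2:ℂ) * (zz p.1 p.2 ^ k * Ez s p.1 p.2))
      + (s*I) * (zz p.1 p.2 ^ k * Ez s p.1 p.2)) :=
    (((J1 (k-1) s).const_mul _).add ((J3 k s).const_mul _)).add ((J1 k s).const_mul _)
  rw [integral_const_mul, integral_add hDX (hDY.const_mul I), integral_const_mul, DXzero, DYzero]
  simp

end GPF


end

open GPF

/-- Fourier-transform identity for a holomorphic-polynomial-times-Gaussian function on `ℂ`:
`∫ (z - w)ⁿ e^{-2π|z|²} ψ_ℂ(z v̄) dμ(z) = (i v - w)ⁿ e^{-2π|v|²}`, where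
`ψ_ℂ(w) = exp(2πi(w + conj w))`, `μ` is twice the Lebesgue measure on `ℂ`, and
`|z|² = z · conj z`. -/
theorem gaussian_polynomial_fourier (n : ℕ) (w v : ℂ) :
    (∫ z : ℂ, (z - w) ^ n * Complex.exp (-(2 * (Real.pi : ℂ)) * (z * conj z)) *
        Complex.exp (2 * (Real.pi : ℂ) * Complex.I * (z * conj v + conj z * v))
      ∂((2 : ENNReal) • (volume : Measure ℂ))) =
      (Complex.I * v - w) ^ n * Complex.exp (-(2 * (Real.pi : ℂ)) * (v * conj v)) := by
  set s : ℂ := 4 * (π:ℂ) * Complex.I * conj v with hs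
  set c : ℂ := Complex.I * v - w with hc
  rw [integral_smul_measure]
  have htrans := MeasureTheory.integral_add_right_eq_self (μ := (volume : Measure ℂ))
      (fun z : ℂ => (z - w) ^ n * Complex.exp (-(2 * (π : ℂ)) * (z * conj z)) *
        Complex.exp (2 * (π : ℂ) * Complex.I * (z * conj v + conj z * v))) (Complex.I * v)
  rw [← htrans]
  have hpoint : ∀ z : ℂ, ((z + Complex.I*v) - w) ^ n *
      Complex.exp (-(2 * (π:ℂ)) * ((z + Complex.I*v) * conj (z + Complex.I*v))) *
      Complex.exp (2 * (π:ℂ) * Complex.I * ((z + Complex.I*v) * conj v + conj (z + Complex.I*v) * v)) =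
      Complex.exp (-(2 * (π:ℂ)) * (v * conj v)) *
      ((z + c) ^ n * Complex.exp (-(2*(π:ℂ)) * (z * conj z) + s * z)) := by
    intro z
    have hcj : conj (z + Complex.I*v) = conj z - Complex.I * conj v := by
      rw [map_add, map_mul, Complex.conj_I]; ring
    have hbase : ((z + Complex.I*v) - w) = z + c := by rw [hc]; ring
    rw [hcj, hbase, mul_assoc, ← Complex.exp_add]
    have hexp : (-(2 * (π:ℂ)) * ((z + Complex.I*v) * (conj z - Complex.I * conj v))) +
        (2 * (π:ℂ) * Complex.I * ((z + Complex.I*v) * conj v + (conj z - Complex.I * conj v) * v)) =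
        (-(2 * (π:ℂ)) * (v * conj v)) + ((-(2*(π:ℂ)) * (z * conj z) + s * z)) := by
      rw [hs]; linear_combination (2 * (π:ℂ) * (v * conj v)) * Complex.I_sq
    rw [hexp, Complex.exp_add]; ring
  simp only [hpoint]
  rw [integral_const_mul]
  have hconv : (∫ z : ℂ, (z + c) ^ n * Complex.exp (-(2*(π:ℂ)) * (z * conj z) + s * z)) =
      ∫ p : ℝ × ℝ, (zz p.1 p.2 + c) ^ n * Ez s p.1 p.2 := by
    rw [← Complex.volume_preserving_equiv_real_prod.integral_comp
      Complex.measurableEquivRealProd.measurableEmbedding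
      (fun p : ℝ × ℝ => (zz p.1 p.2 + c) ^ n * Ez s p.1 p.2)]
    refine integral_congr_ae (Filter.Eventually.of_forall fun z => ?_)
    simp only [Complex.measurableEquivRealProd_apply, GPF.zz, GPF.Ez]
    have hz : (z.re:ℂ) + (z.im:ℂ) * Complex.I = z := Complex.re_add_im z
    have hsq : ((z.re:ℂ))^2 + ((z.im:ℂ))^2 = z * conj z := by
      rw [Complex.mul_conj]; push_cast [Complex.normSq_apply]; ring
    rw [hz, hsq]
  rw [hconv]
  have hexpand : ∀ p : ℝ × ℝ, (zz p.1 p.2 + c)^n * Ez s p.1 p.2 =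
      ∑ k ∈ Finset.range (n+1), (c^(n-k) * (n.choose k : ℂ)) * (zz p.1 p.2 ^ k * Ez s p.1 p.2) := by
    intro p
    rw [add_pow, Finset.sum_mul]
    exact Finset.sum_congr rfl fun k _ => by ring
  simp only [hexpand]
  rw [integral_finset_sum _ (fun k _ => (GPF.J1 k s).const_mul _)]
  rw [Finset.sum_eq_single 0 (fun k _ hk => ?_) (fun h => absurd (Finset.mem_range.mpr (Nat.succ_pos n)) h)]
  · have h0 : (∫ p : ℝ × ℝ, zz p.1 p.2 ^ 0 * Ez s p.1 p.2) = 1/2 := by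
      simp only [pow_zero, one_mul]
      exact GPF.K0 s
    rw [integral_const_mul, h0]
    simp only [Nat.sub_zero, Nat.choose_zero_right, Nat.cast_one, mul_one]
    have : ((2:ENNReal).toReal : ℝ) = 2 := by simp
    rw [this, Complex.real_smul]
    push_cast
    ring
  · obtain ⟨j, rfl⟩ : ∃ j, k = j + 1 := ⟨k - 1, by omega⟩
    rw [integral_const_mul, GPF.Ksucc j s, mul_zero]
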